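/- Every chordless simple graph is 2-degenerate. -/

import Mathlib

/-- A strong edge coloring: any two distinct edges that are adjacent or both
adjacent to a common third edge receive distinct colors. -/
def SimpleGraph.IsStrongEdgeColoring {V : Type*} (G : SimpleGraph V)
    (C : Sym2 V → ℕ) : Prop :=
  ∀ e ∈ G.edgeSet, ∀ f ∈ G.edgeSet, e ≠ f →
    ((∃ v, v ∈ e ∧ v ∈ f) ∨
      ∃ g ∈ G.edgeSet, (∃ v, v ∈ e ∧ v ∈ g) ∧ ∃ w, w ∈ g ∧ w ∈ f) →
    C e ≠ C f

/-- The strong chromatic index: the least number of colors in a strong edge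
coloring of `G`. -/
noncomputable def SimpleGraph.strongChromaticIndex {V : Type*}
    (G : SimpleGraph V) : ℕ :=
  sInf {n | ∃ C : Sym2 V → ℕ, (∀ e ∈ G.edgeSet, C e < n) ∧
    G.IsStrongEdgeColoring C}

/-- A graph is `k`-degenerate if every (induced) subgraph on a nonempty vertex
set has a vertex of degree at most `k` in that subgraph. -/
def SimpleGraph.Degenerate {V : Type*} [Fintype V] (G : SimpleGraph V)
    [DecidableRel G.Adj] (k : ℕ) : Prop :=
  ∀ S : Finset V, S.Nonempty → ∃ v ∈ S, (S.filter (G.Adj v)).card ≤ k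

/-- A graph is chordless if every cycle is an induced cycle, i.e. no cycle has
a chord: any edge joining two vertices of a cycle is an edge of that cycle. -/
def SimpleGraph.Chordless {V : Type*} (G : SimpleGraph V) : Prop :=
  ∀ (v : V) (c : G.Walk v v), c.IsCycle →
    ∀ u w, u ∈ c.support → w ∈ c.support → G.Adj u w → s(u, w) ∈ c.edges

namespace ChordlessAux

open SimpleGraph

variable {V : Type*} {G : SimpleGraph V}

lemma edge_start_unique {a x : V} {q : G.Walk a x} (hq : q.IsPath)
    {w1 w2 : V} (h1 : s(a, w1) ∈ q.edges) (h2 : s(a, w2) ∈ q.edges) : w1 = w2 := by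
  cases q with
  | nil => simp at h1
  | cons h' q' =>
    rename_i b
    have ha : a ∉ q'.support := ((Walk.cons_isPath_iff h' q').mp hq).2
    have resolve : ∀ w, s(a, w) ∈ (Walk.cons h' q').edges → w = b := by
      intro w hw
      rw [Walk.edges_cons, List.mem_cons] at hw
      rcases hw with he | he
      · rcases Sym2.eq_iff.mp he with ⟨-, rfl⟩ | ⟨hab, -⟩
        · rfl
        · exact absurd hab h'.ne
      · exact absurd (Walk.fst_mem_support_of_mem_edges q' he) ha
    rw [resolve w1 h1, resolve w2 h2]

lemma edge_of_length_one {a w : V} (q : G.Walk a w) (h : q.length = 1) :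
    s(a, w) ∈ q.edges := by
  cases q with
  | nil => simp at h
  | cons h' q' =>
    cases q' with
    | nil => simp
    | cons h'' q'' => simp [Walk.length_cons] at h

lemma length_eq_one_of_edge {a u : V} {q : G.Walk a u} (hq : q.IsPath)
    (h : s(a, u) ∈ q.edges) : q.length = 1 := by
  cases q with
  | nil => simp at h
  | cons h' q' =>
    rename_i b
    have ha : a ∉ q'.support := ((Walk.cons_isPath_iff h' q').mp hq).2
    have hb : u = b := by
      rw [Walk.edges_cons, List.mem_cons] at h
      rcases h with he | he
      · rcases Sym2.eq_iff.mp he with ⟨-, rfl⟩ | ⟨hab, -⟩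
        · rfl
        · exact absurd hab h'.ne
      · exact absurd (Walk.fst_mem_support_of_mem_edges q' he) ha
    subst hb
    have hnil : q' = Walk.nil :=
      Walk.isPath_iff_eq_nil.mp ((Walk.cons_isPath_iff h' q').mp hq).1
    subst hnil
    rfl

lemma takeUntil_start [DecidableEq V] {v x : V} (p : G.Walk v x) (h : v ∈ p.support) :
    p.takeUntil v h = Walk.nil := by
  cases p with
  | nil => rfl
  | cons h' q => simp [Walk.takeUntil]

lemma takeUntil_cons_ne [DecidableEq V] {v b x u : V} (h : G.Adj v b) (q : G.Walk b x)
    (hvu : v ≠ u) (hu : u ∈ (Walk.cons h q).support) (hu' : u ∈ q.support) :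
    (Walk.cons h q).takeUntil u hu = Walk.cons h (q.takeUntil u hu') := by
  simp [Walk.takeUntil, dif_neg hvu]

lemma length_takeUntil_lt [DecidableEq V] {v x : V} (p : G.Walk v x) :
    ∀ {w : V} (hw : w ∈ p.support) {u : V} (hu : u ∈ (p.takeUntil w hw).support)
      (_ : u ≠ w),
      (p.takeUntil u (p.support_takeUntil_subset hw hu)).length
        < (p.takeUntil w hw).length := by
  induction p with
  | nil =>
    rename_i y
    intro w hw u hu hne
    have hwv : w = y := by simpa using hw
    subst hwv
    rw [takeUntil_start] at hu
    simp only [Walk.support_nil, List.mem_singleton] at hu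
    exact absurd hu hne
  | cons h q ih =>
    rename_i v' b x'
    intro w hw u hu hne
    by_cases hvw : v' = w
    · subst hvw
      rw [takeUntil_start] at hu
      simp only [Walk.support_nil, List.mem_singleton] at hu
      exact absurd hu hne
    · have hw' : w ∈ q.support := by
        rcases (Walk.mem_support_iff _).mp hw with h1 | h1
        · exact absurd h1.symm hvw
        · simpa using h1
      rw [takeUntil_cons_ne h q hvw hw hw'] at hu ⊢
      by_cases hvu : v' = u
      · subst hvu
        rw [takeUntil_start]
        simp [Walk.length_cons]
      · have hu2 : u ∈ (q.takeUntil w hw').support := by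
          rcases (Walk.mem_support_iff _).mp hu with h1 | h1
          · exact absurd h1.symm hvu
          · simpa using h1
        have hu3 : u ∈ q.support := q.support_takeUntil_subset hw' hu2
        rw [takeUntil_cons_ne h q hvu _ hu3]
        simp only [Walk.length_cons]
        exact Nat.succ_lt_succ (ih hw' hu2 hne)

lemma mem_takeUntil_or [DecidableEq V] {v x : V} (p : G.Walk v x) :
    ∀ {u w : V} (hu : u ∈ p.support) (hw : w ∈ p.support),
      w ∈ (p.takeUntil u hu).support ∨ u ∈ (p.takeUntil w hw).support := by
  induction p with
  | nil =>
    rename_i y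
    intro u w hu hw
    have hwv : w = y := by simpa using hw
    have huv : u = y := by simpa using hu
    subst hwv; subst huv
    left; exact Walk.end_mem_support _
  | cons h q ih =>
    rename_i v' b x'
    intro u w hu hw
    by_cases hvu : v' = u
    · subst hvu; right; exact Walk.start_mem_support _
    by_cases hvw : v' = w
    · subst hvw; left; exact Walk.start_mem_support _
    have hu' : u ∈ q.support := by
      rcases (Walk.mem_support_iff _).mp hu with h1 | h1
      · exact absurd h1.symm hvu
      · simpa using h1
    have hw' : w ∈ q.support := by
      rcases (Walk.mem_support_iff _).mp hw with h1 | h1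
      · exact absurd h1.symm hvw
      · simpa using h1
    rw [takeUntil_cons_ne h q hvu hu hu', takeUntil_cons_ne h q hvw hw hw']
    simp only [Walk.support_cons, List.mem_cons]
    rcases ih hu' hw' with h1 | h1
    · left; right; exact h1
    · right; right; exact h1

end ChordlessAux

open ChordlessAux SimpleGraph

theorem chordless_two_degenerate {V : Type*} [Fintype V]
    (G : SimpleGraph V) [DecidableRel G.Adj]
    (hc : G.Chordless) : G.Degenerate 2 := by
  classical
  intro S hS
  by_contra hcon
  push_neg at hcon
  -- choose a longest path with support in S
  set L : Set ℕ := {n | ∃ (a b : V) (p : G.Walk a b), p.IsPath ∧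
    (∀ x ∈ p.support, x ∈ S) ∧ p.length = n} with hLdef
  obtain ⟨v0, hv0⟩ := hS
  have hLne : L.Nonempty := ⟨0, v0, v0, Walk.nil, by simp, by simp [hv0], rfl⟩
  have hLbdd : BddAbove L := by
    refine ⟨Fintype.card V, ?_⟩
    rintro n ⟨a, b, p, hp, -, rfl⟩
    exact hp.length_lt.le
  obtain ⟨a, b, p, hp, hpS, hplen⟩ := Nat.sSup_mem hLne hLbdd
  have hmax : ∀ m ∈ L, m ≤ p.length := fun m hm => hplen ▸ le_csSup hLbdd hm
  have haS : a ∈ S := hpS a p.start_mem_support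
  set N := S.filter (G.Adj a) with hNdef
  have hNcard : 2 < N.card := hcon a haS
  have hNadj : ∀ w ∈ N, G.Adj a w := fun w hw => (Finset.mem_filter.mp hw).2
  -- every neighbor of a in S lies on the path
  have hNsup : ∀ w ∈ N, w ∈ p.support := by
    intro w hw
    by_contra hws
    have hadj : G.Adj w a := (hNadj w hw).symm
    have hmem : (Walk.cons hadj p).length ∈ L := by
      refine ⟨w, b, Walk.cons hadj p, (Walk.cons_isPath_iff hadj p).mpr ⟨hp, hws⟩, ?_, rfl⟩
      intro x hx
      rw [Walk.support_cons, List.mem_cons] at hx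
      rcases hx with rfl | hx
      · exact (Finset.mem_filter.mp hw).1
      · exact hpS x hx
    have := hmax _ hmem
    simp [Walk.length_cons] at this
  -- pick the neighbor furthest along the path
  set f : V → ℕ := fun w => if h : w ∈ p.support then (p.takeUntil w h).length else 0
    with hfdef
  have hNne : N.Nonempty := Finset.card_pos.mp (by omega)
  obtain ⟨u, huN, humax⟩ := N.exists_max_image f hNne
  have huS : u ∈ p.support := hNsup u huN
  have hau : G.Adj a u := hNadj u huN
  set q := p.takeUntil u huS with hqdef
  have hqpath : q.IsPath := hp.takeUntil huS
  have hfval : ∀ w (hw : w ∈ p.support), f w = (p.takeUntil w hw).length := by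
    intro w hw; simp [hfdef, hw]
  -- all neighbors lie on q
  have hNq : ∀ w ∈ N, w ∈ q.support := by
    intro w hw
    by_cases hwu : w = u
    · subst hwu; exact Walk.end_mem_support q
    · have hws := hNsup w hw
      rcases mem_takeUntil_or p huS hws with h1 | h1
      · exact h1
      · have hlt := length_takeUntil_lt p hws h1 (Ne.symm hwu)
        have h2 : (p.takeUntil w hws).length ≤ (p.takeUntil u huS).length := by
          have := humax w hw
          rwa [hfval w hws, hfval u huS] at this
        exact absurd h2 (not_le.mpr hlt)
  have hfw1 : ∀ w ∈ N, 1 ≤ f w := by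
    intro w hw
    have hws := hNsup w hw
    rw [hfval w hws]
    have hne : (p.takeUntil w hws).length ≠ 0 := fun h0 =>
      (hNadj w hw).ne (Walk.eq_of_length_eq_zero h0)
    omega
  by_cases hedge : s(u, a) ∈ q.edges
  · -- degenerate situation: q has length 1, so all neighbors are "second vertices"
    have hq1 : q.length = 1 := length_eq_one_of_edge hqpath (Sym2.eq_swap ▸ hedge)
    have hall : ∀ w ∈ N, s(a, w) ∈ p.edges := by
      intro w hw
      have hws := hNsup w hw
      have h1 : f w = 1 := by
        have h2 := humax w hw
        rw [hfval u huS, ← hqdef, hq1] at h2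
        have h3 := hfw1 w hw
        omega
      rw [hfval w hws] at h1
      exact (p.edges_takeUntil_subset hws) (edge_of_length_one _ h1)
    obtain ⟨w1, hw1, w2, hw2, hne⟩ := Finset.one_lt_card.mp (by omega : 1 < N.card)
    exact hne (edge_start_unique hp (hall w1 hw1) (hall w2 hw2))
  · -- the cycle q + edge {u,a}
    have hcyc : (Walk.cons hau.symm q).IsCycle :=
      (Walk.cons_isCycle_iff q hau.symm).mpr ⟨hqpath, hedge⟩
    -- find a chord vertex
    have hchordv : ∃ w ∈ N, w ≠ u ∧ s(a, w) ∉ q.edges := by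
      by_contra hno
      push_neg at hno
      have key : ∀ w1 ∈ N, ∀ w2 ∈ N, w1 ≠ u → w2 ≠ u → w1 = w2 := by
        intro w1 h1 w2 h2 hn1 hn2
        exact edge_start_unique hqpath (hno w1 h1 hn1) (hno w2 h2 hn2)
      obtain ⟨x, hx, y, hy, z, hz, hxy, hxz, hyz⟩ := Finset.two_lt_card.mp hNcard
      by_cases hxu : x = u
      · exact hyz (key y hy z hz (fun h => hxy (hxu.trans h.symm)) (fun h => hxz (hxu.trans h.symm)))
      · by_cases hyu : y = u
        · exact hxz (key x hx z hz hxu (fun h => hyz (hyu.trans h.symm)))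
        · exact hxy (key x hx y hy hxu hyu)
    obtain ⟨w, hwN, hwu, hwe⟩ := hchordv
    have hwq : w ∈ q.support := hNq w hwN
    have haq : a ∈ q.support := q.start_mem_support
    have hchord := hc u (Walk.cons hau.symm q) hcyc a w
      (by rw [Walk.support_cons]; exact List.mem_cons_of_mem _ haq)
      (by rw [Walk.support_cons]; exact List.mem_cons_of_mem _ hwq)
      (hNadj w hwN)
    rw [Walk.edges_cons, List.mem_cons] at hchord
    rcases hchord with he | he
    · rcases Sym2.eq_iff.mp he with ⟨hau', -⟩ | ⟨-, hwu'⟩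
      · exact hau.ne' hau'.symm
      · exact hwu hwu'
    · exact hwe he
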